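/- Let n ≥ 1, T = 2^n, d ≥ 1, and let H_n ∈ ℝ^{T×T} be the unnormalized Haar matrix. For u_1,…,u_T ∈ ℝ^d let ũ := ∑_{t=1}^T e_t ⊗ u_t ∈ ℝ^{dT}, and for σ ∈ {1,2,4,…,T} and j ∈ {1,…,T/σ} define the local average ū_j^{(σ)} := (1/σ) ∑_{t=(j−1)σ+1}^{jσ} u_t ∈ ℝ^d, with ū := ū_1^{(T)} the overall average. Then H_nH_nᵀ is invertible and, with M := (H_nH_nᵀ)^{−1} ⊗ I_d, the weighted squared norm decomposes over timescales as ũᵀ M ũ = ‖ū‖₂² + ∑_{k=0}^{n−1} (1/4) ∑_{i=1}^{2^{n−1−k}} ‖ū_{2i−1}^{(2^k)} − ū_{2i}^{(2^k)}‖₂². -/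

import Mathlib

open Matrix Finset
open scoped Kronecker

/-- The Haar basis vector `h_i^{(τ)} ∈ ℝ^T` (with 1-based location `i` and
0-based row index `t`, so `[h_i^{(τ)}]_{t+1}`): `1` on the first half of the
`i`-th block of length `τ`, `−1` on the second half, `0` elsewhere. -/
def haarVec (τ i t : ℕ) : ℝ :=
  if (i - 1) * τ ≤ t ∧ t < (i - 1) * τ + τ / 2 then 1
  else if (i - 1) * τ + τ / 2 ≤ t ∧ t < i * τ then -1
  else 0

lemma div_eq_iff' {σ : ℕ} (hσ : 0 < σ) (a t : ℕ) :
    t / σ = a ↔ a * σ ≤ t ∧ t < (a + 1) * σ := by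
  constructor
  · rintro rfl
    exact ⟨Nat.div_mul_le_self t σ, (Nat.div_lt_iff_lt_mul hσ).1 (Nat.lt_succ_self _)⟩
  · rintro ⟨h1, h2⟩
    exact Nat.div_eq_of_lt_le h1 h2

lemma haar_div (σ i t : ℕ) (hσ : 1 ≤ σ) (hi : 1 ≤ i) :
    haarVec (2 * σ) i t =
      if t / σ = 2 * i - 2 then 1 else if t / σ = 2 * i - 1 then -1 else 0 := by
  obtain ⟨j, rfl⟩ : ∃ j, i = j + 1 := ⟨i - 1, by omega⟩
  have h2 : 2 * σ / 2 = σ := by omega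
  have e0 : j + 1 - 1 = j := by omega
  have e1 : 2 * (j + 1) - 2 = 2 * j := by omega
  have e2 : 2 * (j + 1) - 1 = 2 * j + 1 := by omega
  rw [haarVec, h2, e0, e1, e2,
    show j * (2 * σ) = 2 * j * σ by ring]
  rw [show 2 * j * σ + σ = (2 * j + 1) * σ by ring,
    show (j + 1) * (2 * σ) = (2 * j + 1 + 1) * σ by ring]
  simp only [div_eq_iff' hσ]

lemma haar_one {σ i t : ℕ} (hσ : 1 ≤ σ) (hi : 1 ≤ i)
    (h1 : (2 * i - 2) * σ ≤ t) (h2 : t < (2 * i - 1) * σ) :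
    haarVec (2 * σ) i t = 1 := by
  rw [haar_div σ i t hσ hi, if_pos]
  exact (div_eq_iff' hσ _ t).2 ⟨h1, by rwa [show 2 * i - 2 + 1 = 2 * i - 1 by omega]⟩

lemma haar_neg {σ i t : ℕ} (hσ : 1 ≤ σ) (hi : 1 ≤ i)
    (h1 : (2 * i - 1) * σ ≤ t) (h2 : t < (2 * i) * σ) :
    haarVec (2 * σ) i t = -1 := by
  have hd : t / σ = 2 * i - 1 :=
    (div_eq_iff' hσ _ t).2 ⟨h1, by rwa [show 2 * i - 1 + 1 = 2 * i by omega]⟩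
  rw [haar_div σ i t hσ hi, hd, if_neg (by omega), if_pos rfl]

lemma haar_zero {σ i t : ℕ} (hσ : 1 ≤ σ) (hi : 1 ≤ i)
    (h : t < (2 * i - 2) * σ ∨ 2 * i * σ ≤ t) :
    haarVec (2 * σ) i t = 0 := by
  rw [haar_div σ i t hσ hi]
  rcases h with h | h
  · have hlt : t / σ < 2 * i - 2 := (Nat.div_lt_iff_lt_mul hσ).2 h
    rw [if_neg (by omega), if_neg (by omega)]
  · have hge : 2 * i ≤ t / σ := (Nat.le_div_iff_mul_le hσ).2 h
    rw [if_neg (by omega), if_neg (by omega)]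

lemma sum_haar_mul (σ i T : ℕ) (hσ : 1 ≤ σ) (hi : 1 ≤ i) (hT : 2 * i * σ ≤ T)
    (v : ℕ → ℝ) :
    ∑ t ∈ Finset.range T, haarVec (2 * σ) i t * v t
      = (∑ t ∈ Finset.Ico ((2 * i - 2) * σ) ((2 * i - 1) * σ), v t)
        - ∑ t ∈ Finset.Ico ((2 * i - 1) * σ) (2 * i * σ), v t := by
  have hAB : (2 * i - 2) * σ ≤ (2 * i - 1) * σ := Nat.mul_le_mul_right σ (by omega)
  have hBC : (2 * i - 1) * σ ≤ 2 * i * σ := Nat.mul_le_mul_right σ (by omega)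
  have hAT : (2 * i - 2) * σ ≤ T := le_trans (le_trans hAB hBC) hT
  have hBT : (2 * i - 1) * σ ≤ T := le_trans hBC hT
  rw [Finset.range_eq_Ico,
    ← Finset.sum_Ico_consecutive _ (Nat.zero_le ((2 * i - 2) * σ)) hAT,
    ← Finset.sum_Ico_consecutive _ hAB hBT,
    ← Finset.sum_Ico_consecutive _ hBC hT]
  have p1 : ∑ t ∈ Finset.Ico 0 ((2 * i - 2) * σ), haarVec (2 * σ) i t * v t = 0 :=
    Finset.sum_eq_zero fun t ht => by
      rw [haar_zero hσ hi (Or.inl (Finset.mem_Ico.1 ht).2), zero_mul]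
  have p4 : ∑ t ∈ Finset.Ico (2 * i * σ) T, haarVec (2 * σ) i t * v t = 0 :=
    Finset.sum_eq_zero fun t ht => by
      rw [haar_zero hσ hi (Or.inr (Finset.mem_Ico.1 ht).1), zero_mul]
  have p2 : ∑ t ∈ Finset.Ico ((2 * i - 2) * σ) ((2 * i - 1) * σ), haarVec (2 * σ) i t * v t
      = ∑ t ∈ Finset.Ico ((2 * i - 2) * σ) ((2 * i - 1) * σ), v t :=
    Finset.sum_congr rfl fun t ht => by
      rw [haar_one hσ hi (Finset.mem_Ico.1 ht).1 (Finset.mem_Ico.1 ht).2, one_mul]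
  have p3 : ∑ t ∈ Finset.Ico ((2 * i - 1) * σ) (2 * i * σ), haarVec (2 * σ) i t * v t
      = -∑ t ∈ Finset.Ico ((2 * i - 1) * σ) (2 * i * σ), v t := by
    rw [← Finset.sum_neg_distrib]
    exact Finset.sum_congr rfl fun t ht => by
      rw [haar_neg hσ hi (Finset.mem_Ico.1 ht).1 (Finset.mem_Ico.1 ht).2]; ring
  rw [p1, p2, p3, p4]; ring

lemma card_block (i : ℕ) (hi : 1 ≤ i) (σ : ℕ) :
    (2 * i - 1) * σ - (2 * i - 2) * σ = σ ∧ 2 * i * σ - (2 * i - 1) * σ = σ := by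
  constructor
  · rw [← Nat.sub_mul, show 2 * i - 1 - (2 * i - 2) = 1 by omega, one_mul]
  · rw [← Nat.sub_mul, show 2 * i - (2 * i - 1) = 1 by omega, one_mul]

lemma sum_haar (σ i T : ℕ) (hσ : 1 ≤ σ) (hi : 1 ≤ i) (hT : 2 * i * σ ≤ T) :
    ∑ t ∈ Finset.range T, haarVec (2 * σ) i t = 0 := by
  have h := sum_haar_mul σ i T hσ hi hT (fun _ => (1 : ℝ))
  simp only [mul_one] at h
  rw [h, Finset.sum_const, Finset.sum_const, Nat.card_Ico, Nat.card_Ico,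
    (card_block i hi σ).1, (card_block i hi σ).2, sub_self]

lemma haar_cross (σ σ' i i' T : ℕ) (hσ : 1 ≤ σ) (hσ' : 1 ≤ σ') (hi : 1 ≤ i) (hi' : 1 ≤ i')
    (hdvd : 2 * σ ∣ σ') (hT : 2 * i * σ ≤ T) :
    ∑ t ∈ Finset.range T, haarVec (2 * σ) i t * haarVec (2 * σ') i' t = 0 := by
  obtain ⟨c, hc⟩ := hdvd
  have hcpos : 1 ≤ c := by
    rcases Nat.eq_zero_or_pos c with h | h
    · subst h; simp at hc; omega
    · exact h
  have key : ∀ t, (2 * i - 2) * σ ≤ t → t < 2 * i * σ → t / σ' = (i - 1) / c := by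
    intro t h1 h2
    have hblk : t / (2 * σ) = i - 1 := by
      refine (div_eq_iff' (by omega) _ _).2 ⟨?_, ?_⟩
      · calc (i - 1) * (2 * σ) = (2 * (i - 1)) * σ := by ring
          _ = (2 * i - 2) * σ := by rw [show 2 * (i - 1) = 2 * i - 2 by omega]
          _ ≤ t := h1
      · calc t < 2 * i * σ := h2
          _ = (i - 1 + 1) * (2 * σ) := by rw [show i - 1 + 1 = i by omega]; ring
    rw [hc, ← Nat.div_div_eq_div_mul, hblk]
  rw [sum_haar_mul σ i T hσ hi hT]
  have hAC : (2 * i - 2) * σ ≤ (2 * i - 1) * σ := Nat.mul_le_mul_right σ (by omega)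
  have hBC : (2 * i - 1) * σ ≤ 2 * i * σ := Nat.mul_le_mul_right σ (by omega)
  set K : ℝ := haarVec (2 * σ') i' ((2 * i - 2) * σ) with hK
  have hAin : (2 * i - 2) * σ < 2 * i * σ := by
    exact (Nat.mul_lt_mul_right (show 0 < σ by omega)).2 (show 2 * i - 2 < 2 * i by omega)
  have const1 : ∀ t, (2 * i - 2) * σ ≤ t → t < 2 * i * σ → haarVec (2 * σ') i' t = K := by
    intro t h1 h2
    rw [hK, haar_div σ' i' t hσ' hi', haar_div σ' i' _ hσ' hi',
      key t h1 h2, key _ (le_refl _) hAin]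
  have s1 : ∑ t ∈ Finset.Ico ((2 * i - 2) * σ) ((2 * i - 1) * σ), haarVec (2 * σ') i' t
      = (σ : ℝ) * K := by
    rw [Finset.sum_congr rfl fun t ht => const1 t (Finset.mem_Ico.1 ht).1
      (lt_of_lt_of_le (Finset.mem_Ico.1 ht).2 hBC), Finset.sum_const, Nat.card_Ico,
      (card_block i hi σ).1, nsmul_eq_mul]
  have s2 : ∑ t ∈ Finset.Ico ((2 * i - 1) * σ) (2 * i * σ), haarVec (2 * σ') i' t
      = (σ : ℝ) * K := by
    rw [Finset.sum_congr rfl fun t ht => const1 t (le_trans hAC (Finset.mem_Ico.1 ht).1)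
      (Finset.mem_Ico.1 ht).2, Finset.sum_const, Nat.card_Ico,
      (card_block i hi σ).2, nsmul_eq_mul]
  rw [s1, s2, sub_self]

lemma haar_same (σ i i' T : ℕ) (hσ : 1 ≤ σ) (hi : 1 ≤ i) (hi' : 1 ≤ i') (hne : i ≠ i') :
    ∑ t ∈ Finset.range T, haarVec (2 * σ) i t * haarVec (2 * σ) i' t = 0 := by
  refine Finset.sum_eq_zero fun t _ => ?_
  by_cases h : (2 * i - 2) * σ ≤ t ∧ t < 2 * i * σ
  · have hz : haarVec (2 * σ) i' t = 0 := by
      refine haar_zero hσ hi' ?_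
      rcases lt_or_gt_of_ne hne with hlt | hgt
      · left
        calc t < 2 * i * σ := h.2
          _ ≤ (2 * i' - 2) * σ := Nat.mul_le_mul_right σ (by omega)
      · right
        calc 2 * i' * σ ≤ (2 * i - 2) * σ := Nat.mul_le_mul_right σ (by omega)
          _ ≤ t := h.1
    rw [hz, mul_zero]
  · have hz : haarVec (2 * σ) i t = 0 := haar_zero hσ hi (by omega)
    rw [hz, zero_mul]

lemma haar_norm (σ i T : ℕ) (hσ : 1 ≤ σ) (hi : 1 ≤ i) (hT : 2 * i * σ ≤ T) :
    ∑ t ∈ Finset.range T, haarVec (2 * σ) i t * haarVec (2 * σ) i t = 2 * (σ : ℝ) := by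
  rw [sum_haar_mul σ i T hσ hi hT]
  have s1 : ∑ t ∈ Finset.Ico ((2 * i - 2) * σ) ((2 * i - 1) * σ), haarVec (2 * σ) i t
      = (σ : ℝ) := by
    rw [Finset.sum_congr rfl fun t ht => haar_one hσ hi (Finset.mem_Ico.1 ht).1
      (Finset.mem_Ico.1 ht).2, Finset.sum_const, Nat.card_Ico, (card_block i hi σ).1,
      nsmul_eq_mul, mul_one]
  have s2 : ∑ t ∈ Finset.Ico ((2 * i - 1) * σ) (2 * i * σ), haarVec (2 * σ) i t
      = -(σ : ℝ) := by
    rw [Finset.sum_congr rfl fun t ht => haar_neg hσ hi (Finset.mem_Ico.1 ht).1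
      (Finset.mem_Ico.1 ht).2, Finset.sum_const, Nat.card_Ico, (card_block i hi σ).2,
      nsmul_eq_mul]
    ring
  rw [s1, s2]; ring

/-- The unnormalized Haar matrix `H_n ∈ ℝ^{T×T}`, `T = 2^n`: its first column
(0-based column `0`) is the all-ones vector `h_0`, and its `(T/τ + i)`-th
column (1-based; 0-based column `c = T/τ + i − 1 = 2^m + (i−1)` with
`m = log₂(T/τ)`, so `m = Nat.log 2 c`, `τ = 2^n/2^m`, `i = c − 2^m + 1`)
is `h_i^{(τ)}`, for `τ ∈ {2,4,…,T}` and `i ∈ {1,…,T/τ}`. -/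
def haarMatrix (n : ℕ) : Matrix (Fin (2^n)) (Fin (2^n)) ℝ :=
  fun t c =>
    if (c : ℕ) = 0 then 1
    else haarVec (2^n / 2^(Nat.log 2 c)) ((c : ℕ) - 2^(Nat.log 2 c) + 1) t

lemma two_pow_split {n m : ℕ} (hm : m < n) : 2^(n - m) = 2 * 2^(n - m - 1) := by
  conv_lhs => rw [show n - m = (n - m - 1) + 1 from by omega]
  rw [pow_succ]; ring

lemma entry_eq (n : ℕ) (t c : Fin (2^n)) (m : ℕ) (hm : m < n)
    (hc1 : 2^m ≤ (c : ℕ)) (hc2 : (c : ℕ) < 2^(m+1)) :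
    haarMatrix n t c = haarVec (2 * 2^(n - m - 1)) ((c : ℕ) - 2^m + 1) (t : ℕ) := by
  have hc0 : (c : ℕ) ≠ 0 := by have := Nat.one_le_two_pow (n := m); omega
  show (if (c : ℕ) = 0 then (1:ℝ) else _) = _
  rw [if_neg hc0, Nat.log_eq_of_pow_le_of_lt_pow hc1 hc2,
    Nat.pow_div (le_of_lt hm) two_pos, two_pow_split hm]

lemma block_bound {n m i : ℕ} (hm : m < n) (hi : i ≤ 2^m) :
    2 * i * 2^(n - m - 1) ≤ 2^n := by
  calc 2 * i * 2^(n - m - 1) ≤ 2 * 2^m * 2^(n - m - 1) :=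
        Nat.mul_le_mul_right _ (Nat.mul_le_mul_left _ hi)
    _ = 2^(1 + m + (n - m - 1)) := by rw [pow_add, pow_add, pow_one]
    _ = 2^n := by congr 1; omega

lemma haar_orth (n m m' i i' : ℕ) (hm : m < n) (hm' : m' < n) (hi : 1 ≤ i) (hi' : 1 ≤ i')
    (hiu : i ≤ 2^m) (hiu' : i' ≤ 2^m') (hne : ¬(m = m' ∧ i = i')) :
    ∑ t ∈ Finset.range (2^n),
      haarVec (2 * 2^(n - m - 1)) i t * haarVec (2 * 2^(n - m' - 1)) i' t = 0 := by
  have hσ : 1 ≤ 2^(n - m - 1) := Nat.one_le_two_pow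
  have hσ' : 1 ≤ 2^(n - m' - 1) := Nat.one_le_two_pow
  rcases Nat.lt_trichotomy m m' with h | h | h
  · rw [Finset.sum_congr rfl fun t _ => mul_comm (haarVec (2 * 2^(n - m - 1)) i t) _]
    refine haar_cross _ _ _ _ _ hσ' hσ hi' hi ?_ (block_bound hm' hiu')
    rw [← two_pow_split hm']
    exact pow_dvd_pow 2 (by omega)
  · subst h
    exact haar_same _ _ _ _ hσ hi hi' (by tauto)
  · refine haar_cross _ _ _ _ _ hσ hσ' hi hi' ?_ (block_bound hm hiu)
    rw [← two_pow_split hm]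
    exact pow_dvd_pow 2 (by omega)

noncomputable def dvec (n : ℕ) : Fin (2^n) → ℝ := fun c =>
  if (c : ℕ) = 0 then ((2^n : ℕ) : ℝ) else ((2^(n - Nat.log 2 (c : ℕ)) : ℕ) : ℝ)

lemma dvec_pos (n : ℕ) (c : Fin (2^n)) : 0 < dvec n c := by
  rw [dvec]; split <;> positivity

lemma log_facts (n : ℕ) (c : Fin (2^n)) (hc : (c : ℕ) ≠ 0) :
    Nat.log 2 (c : ℕ) < n ∧ 2^(Nat.log 2 (c : ℕ)) ≤ (c : ℕ) ∧
      (c : ℕ) < 2^(Nat.log 2 (c : ℕ) + 1) := by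
  exact ⟨Nat.log_lt_of_lt_pow hc c.2, Nat.pow_log_le_self 2 hc,
    Nat.lt_pow_succ_log_self one_lt_two _⟩

lemma HtH (n : ℕ) : (haarMatrix n)ᵀ * haarMatrix n = Matrix.diagonal (dvec n) := by
  ext c c'
  rw [Matrix.mul_apply]
  simp only [Matrix.transpose_apply]
  by_cases hc : (c : ℕ) = 0 <;> by_cases hc' : (c' : ℕ) = 0
  · have hcc : c = c' := Fin.ext (by omega)
    subst hcc
    rw [Matrix.diagonal_apply_eq]
    have : ∀ t : Fin (2^n), haarMatrix n t c * haarMatrix n t c = 1 := by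
      intro t; show (if (c:ℕ) = 0 then (1:ℝ) else _) * (if (c:ℕ) = 0 then (1:ℝ) else _) = 1
      rw [if_pos hc, mul_one]
    rw [Finset.sum_congr rfl fun t _ => this t, Finset.sum_const, Finset.card_univ,
      Fintype.card_fin, nsmul_eq_mul, mul_one, dvec, if_pos hc]
  · have hne : c ≠ c' := fun h => hc' (h ▸ hc)
    rw [Matrix.diagonal_apply_ne _ hne]
    obtain ⟨hm', hl', hu'⟩ := log_facts n c' hc'
    set m' := Nat.log 2 (c' : ℕ)
    have h1 : ∀ t : Fin (2^n), haarMatrix n t c * haarMatrix n t c'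
        = haarVec (2 * 2^(n - m' - 1)) ((c' : ℕ) - 2^m' + 1) (t : ℕ) := by
      intro t
      rw [entry_eq n t c' m' hm' hl' hu']
      show (if (c:ℕ) = 0 then (1:ℝ) else _) * _ = _
      rw [if_pos hc, one_mul]
    rw [Finset.sum_congr rfl fun t _ => h1 t,
      Fin.sum_univ_eq_sum_range (fun t => haarVec (2 * 2^(n - m' - 1)) ((c' : ℕ) - 2^m' + 1) t)]
    refine sum_haar _ _ _ Nat.one_le_two_pow (by omega) (block_bound hm' ?_)
    have h2 : 2^(m' + 1) = 2 * 2^m' := by rw [pow_succ]; ring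
    omega
  · have hne : c ≠ c' := fun h => hc (h ▸ hc')
    rw [Matrix.diagonal_apply_ne _ hne]
    obtain ⟨hm, hl, hu⟩ := log_facts n c hc
    set m := Nat.log 2 (c : ℕ)
    have h1 : ∀ t : Fin (2^n), haarMatrix n t c * haarMatrix n t c'
        = haarVec (2 * 2^(n - m - 1)) ((c : ℕ) - 2^m + 1) (t : ℕ) := by
      intro t
      rw [entry_eq n t c m hm hl hu]
      show _ * (if (c':ℕ) = 0 then (1:ℝ) else _) = _
      rw [if_pos hc', mul_one]
    rw [Finset.sum_congr rfl fun t _ => h1 t,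
      Fin.sum_univ_eq_sum_range (fun t => haarVec (2 * 2^(n - m - 1)) ((c : ℕ) - 2^m + 1) t)]
    refine sum_haar _ _ _ Nat.one_le_two_pow (by omega) (block_bound hm ?_)
    have h2 : 2^(m + 1) = 2 * 2^m := by rw [pow_succ]; ring
    omega
  · obtain ⟨hm, hl, hu⟩ := log_facts n c hc
    obtain ⟨hm', hl', hu'⟩ := log_facts n c' hc'
    set m := Nat.log 2 (c : ℕ)
    set m' := Nat.log 2 (c' : ℕ)
    have h2m : 2^(m + 1) = 2 * 2^m := by rw [pow_succ]; ring
    have h2m' : 2^(m' + 1) = 2 * 2^m' := by rw [pow_succ]; ring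
    have h1 : ∀ t : Fin (2^n), haarMatrix n t c * haarMatrix n t c'
        = haarVec (2 * 2^(n - m - 1)) ((c : ℕ) - 2^m + 1) (t : ℕ)
          * haarVec (2 * 2^(n - m' - 1)) ((c' : ℕ) - 2^m' + 1) (t : ℕ) := by
      intro t
      rw [entry_eq n t c m hm hl hu, entry_eq n t c' m' hm' hl' hu']
    rw [Finset.sum_congr rfl fun t _ => h1 t,
      Fin.sum_univ_eq_sum_range (fun t => haarVec (2 * 2^(n - m - 1)) ((c : ℕ) - 2^m + 1) t
        * haarVec (2 * 2^(n - m' - 1)) ((c' : ℕ) - 2^m' + 1) t)]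
    by_cases hcc : c = c'
    · subst hcc
      rw [Matrix.diagonal_apply_eq]
      rw [haar_norm _ _ _ Nat.one_le_two_pow (by omega) (block_bound hm (by omega))]
      rw [dvec, if_neg hc]
      have : (2:ℕ)^(n - m) = 2 * 2^(n - m - 1) := two_pow_split hm
      rw [this]
      push_cast
      ring
    · rw [Matrix.diagonal_apply_ne _ hcc]
      refine haar_orth n m m' _ _ hm hm' (by omega) (by omega) (by omega) (by omega) ?_
      rintro ⟨h1, hii⟩
      have hpow : (2:ℕ)^m = 2^m' := by rw [h1]
      exact hcc (Fin.ext (by omega))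

lemma inv_one_diag (n : ℕ) :
    haarMatrix n * Matrix.diagonal (fun c => (dvec n c)⁻¹) * (haarMatrix n)ᵀ = 1 := by
  have hd : ∀ c, dvec n c ≠ 0 := fun c => ne_of_gt (dvec_pos n c)
  have h2 : (haarMatrix n)ᵀ * (haarMatrix n * Matrix.diagonal (fun c => (dvec n c)⁻¹)) = 1 := by
    rw [← Matrix.mul_assoc, HtH, Matrix.diagonal_mul_diagonal]
    rw [show (fun c => dvec n c * (dvec n c)⁻¹) = fun _ => (1:ℝ) from
      funext fun c => mul_inv_cancel₀ (hd c)]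
    exact Matrix.diagonal_one
  exact mul_eq_one_comm.1 h2

lemma right_inv (n : ℕ) :
    (haarMatrix n * (haarMatrix n)ᵀ) *
      (haarMatrix n * Matrix.diagonal (fun c => (dvec n c)⁻¹ * (dvec n c)⁻¹) * (haarMatrix n)ᵀ)
      = 1 := by
  have hd : ∀ c, dvec n c ≠ 0 := fun c => ne_of_gt (dvec_pos n c)
  calc haarMatrix n * (haarMatrix n)ᵀ *
        (haarMatrix n * Matrix.diagonal (fun c => (dvec n c)⁻¹ * (dvec n c)⁻¹) * (haarMatrix n)ᵀ)
      = haarMatrix n * (((haarMatrix n)ᵀ * haarMatrix n) *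
          Matrix.diagonal (fun c => (dvec n c)⁻¹ * (dvec n c)⁻¹)) * (haarMatrix n)ᵀ := by
        simp only [Matrix.mul_assoc]
    _ = haarMatrix n * Matrix.diagonal (fun c => (dvec n c)⁻¹) * (haarMatrix n)ᵀ := by
        rw [HtH, Matrix.diagonal_mul_diagonal]
        congr 2
        funext c
        field_simp
    _ = 1 := inv_one_diag n

lemma sum_quad {N : ℕ} (a : Fin N → Fin N → ℝ) (e : Fin N → ℝ) (v : Fin N → ℝ) :
    ∑ s : Fin N, v s * ∑ t : Fin N, (∑ c : Fin N, a s c * e c * a t c) * v t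
      = ∑ c : Fin N, e c * (∑ t : Fin N, a t c * v t)^2 := by
  have step1 : ∀ s : Fin N, v s * ∑ t : Fin N, (∑ c : Fin N, a s c * e c * a t c) * v t
      = ∑ t : Fin N, ∑ c : Fin N, e c * ((a s c * v s) * (a t c * v t)) := by
    intro s
    rw [Finset.mul_sum]
    refine Finset.sum_congr rfl fun t _ => ?_
    rw [Finset.sum_mul, Finset.mul_sum]
    exact Finset.sum_congr rfl fun c _ => by ring
  rw [Finset.sum_congr rfl fun s _ => step1 s]
  rw [Finset.sum_congr rfl fun s (_ : s ∈ Finset.univ) =>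
    Finset.sum_comm (s := Finset.univ) (t := Finset.univ)
      (f := fun t c => e c * ((a s c * v s) * (a t c * v t)))]
  rw [Finset.sum_comm]
  refine Finset.sum_congr rfl fun c _ => ?_
  rw [sq, Finset.sum_mul_sum]
  rw [Finset.mul_sum]
  refine Finset.sum_congr rfl fun s _ => ?_
  rw [Finset.mul_sum]

lemma quad_form (N d : ℕ) (H : Matrix (Fin N) (Fin N) ℝ) (e : Fin N → ℝ)
    (u : ℕ → Fin d → ℝ) :
    (fun p : Fin N × Fin d => u p.1 p.2) ⬝ᵥ
        (((H * Matrix.diagonal e * Hᵀ) ⊗ₖ (1 : Matrix (Fin d) (Fin d) ℝ)) *ᵥ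
          (fun p : Fin N × Fin d => u p.1 p.2))
      = ∑ c : Fin N, e c * ∑ x : Fin d, (∑ t : Fin N, H t c * u (t : ℕ) x)^2 := by
  classical
  have collapse : ∀ s : Fin N, ∀ x : Fin d,
      (((H * Matrix.diagonal e * Hᵀ) ⊗ₖ (1 : Matrix (Fin d) (Fin d) ℝ)) *ᵥ
        (fun p : Fin N × Fin d => u p.1 p.2)) (s, x)
      = ∑ t : Fin N, (∑ c : Fin N, H s c * e c * H t c) * u (t : ℕ) x := by
    intro s x
    rw [Matrix.mulVec]
    show ∑ q : Fin N × Fin d, ((H * Matrix.diagonal e * Hᵀ) (s, x).1 q.1 *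
      (1 : Matrix (Fin d) (Fin d) ℝ) (s, x).2 q.2) * u q.1 q.2 = _
    rw [Fintype.sum_prod_type]
    refine Finset.sum_congr rfl fun t _ => ?_
    have : ∀ y : Fin d, ((H * Matrix.diagonal e * Hᵀ) s t *
        (1 : Matrix (Fin d) (Fin d) ℝ) x y) * u (t : ℕ) y
        = if y = x then (H * Matrix.diagonal e * Hᵀ) s t * u (t : ℕ) x else 0 := by
      intro y
      rw [Matrix.one_apply]
      by_cases h : x = y
      · subst h; simp
      · rw [if_neg h, if_neg (fun hh => h hh.symm)]; ring
    rw [Finset.sum_congr rfl fun y _ => this y, Finset.sum_ite_eq' Finset.univ x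
      (fun _ => (H * Matrix.diagonal e * Hᵀ) s t * u (t : ℕ) x), if_pos (Finset.mem_univ x)]
    congr 1
    rw [Matrix.mul_apply]
    refine Finset.sum_congr rfl fun c _ => ?_
    rw [Matrix.mul_diagonal, Matrix.transpose_apply]
  rw [dotProduct]
  rw [Fintype.sum_prod_type]
  rw [Finset.sum_congr rfl fun s _ => Finset.sum_congr rfl fun x (_ : x ∈ Finset.univ) => by
    rw [collapse s x]]
  rw [Finset.sum_comm]
  rw [Finset.sum_congr rfl fun x (_ : x ∈ Finset.univ) =>
    sum_quad (fun s c => H s c) e (fun t => u (t : ℕ) x)]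
  rw [Finset.sum_comm]
  exact Finset.sum_congr rfl fun c _ => (Finset.mul_sum _ _ _).symm

lemma dyadic_sum (n : ℕ) (F : ℕ → ℝ) :
    ∑ c ∈ Finset.range (2^n), F c
      = F 0 + ∑ m ∈ Finset.range n, ∑ c ∈ Finset.Ico (2^m) (2^(m+1)), F c := by
  induction n with
  | zero => simp
  | succ n ih =>
    have hsplit := Finset.sum_Ico_consecutive F (Nat.zero_le (2^n))
      (Nat.pow_le_pow_right two_pos (Nat.le_succ n))
    rw [Finset.sum_range_succ, ← add_assoc, ← ih, Finset.range_eq_Ico, Finset.range_eq_Ico]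
    exact hsplit.symm

lemma block_sum (m : ℕ) (F : ℕ → ℝ) :
    ∑ c ∈ Finset.Ico (2^m) (2^(m+1)), F c = ∑ i ∈ Finset.Icc 1 (2^m), F (2^m + i - 1) := by
  have h2 : (2:ℕ)^(m+1) = 2 * 2^m := by rw [pow_succ]; ring
  refine Finset.sum_nbij' (fun c => c - 2^m + 1) (fun i => 2^m + i - 1) ?_ ?_ ?_ ?_ ?_
  · intro c hc; simp only [Finset.mem_Ico] at hc; simp only [Finset.mem_Icc]; omega
  · intro i hi; simp only [Finset.mem_Icc] at hi; simp only [Finset.mem_Ico]; omega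
  · intro c hc; simp only [Finset.mem_Ico] at hc; omega
  · intro i hi; simp only [Finset.mem_Icc] at hi; omega
  · intro c hc; simp only [Finset.mem_Ico] at hc; congr 1; omega

/-- The local average `ū_j^{(σ)} := (1/σ)·∑_{t=(j−1)σ+1}^{jσ} u_t ∈ ℝ^d`, with
1-based block index `j` and the comparators indexed 0-based
(`u_1,…,u_T ↦ u 0,…,u (T−1)`). -/
noncomputable def localAvg (d : ℕ) (u : ℕ → Fin d → ℝ) (σ j : ℕ) : Fin d → ℝ :=
  fun x => (1 / (σ : ℝ)) * ∑ t ∈ Finset.Ico ((j - 1) * σ) (j * σ), u t x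

/-- **Multiscale decomposition of the Haar-weighted norm.**
`H_nH_nᵀ` is invertible and, with `M := (H_nH_nᵀ)⁻¹ ⊗ I_d` and `ũ` the
concatenation of `u_1,…,u_T` (`T = 2^n`),
`ũᵀMũ = ‖ū‖₂² + ∑_{k=0}^{n−1} (1/4) ∑_{i=1}^{2^{n−1−k}}
‖ū_{2i−1}^{(2^k)} − ū_{2i}^{(2^k)}‖₂²`, where `ū = ū_1^{(T)}` is the overall
average. -/
theorem haar_weighted_norm_decomposition (n d : ℕ) (hn : 1 ≤ n) (hd : 1 ≤ d)
    (u : ℕ → Fin d → ℝ) :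
    IsUnit (haarMatrix n * (haarMatrix n)ᵀ) ∧
    (fun p : Fin (2^n) × Fin d => u p.1 p.2) ⬝ᵥ
        (((haarMatrix n * (haarMatrix n)ᵀ)⁻¹ ⊗ₖ (1 : Matrix (Fin d) (Fin d) ℝ)) *ᵥ
          (fun p : Fin (2^n) × Fin d => u p.1 p.2))
      = (∑ x : Fin d, (localAvg d u (2^n) 1 x)^2)
        + ∑ k ∈ Finset.range n, (1/4 : ℝ) *
            ∑ i ∈ Finset.Icc 1 (2^(n - 1 - k)), ∑ x : Fin d,
              (localAvg d u (2^k) (2*i - 1) x - localAvg d u (2^k) (2*i) x)^2 := by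
  classical
  have h3 := right_inv n
  have hunit : IsUnit (haarMatrix n * (haarMatrix n)ᵀ) := by
    rw [Matrix.isUnit_iff_isUnit_det]
    exact isUnit_iff_exists_inv.2 ⟨_, by rw [← Matrix.det_mul, h3, Matrix.det_one]⟩
  refine ⟨hunit, ?_⟩
  rw [Matrix.inv_eq_right_inv h3, quad_form]
  set G : ℕ → ℝ := fun c =>
    if c = 0 then ∑ x : Fin d, (localAvg d u (2^n) 1 x)^2
    else (1/4 : ℝ) * ∑ x : Fin d,
      (localAvg d u (2^(n - Nat.log 2 c - 1)) (2*(c - 2^(Nat.log 2 c) + 1) - 1) x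
        - localAvg d u (2^(n - Nat.log 2 c - 1)) (2*(c - 2^(Nat.log 2 c) + 1)) x)^2
    with hGdef
  have hcol : ∀ c : Fin (2^n),
      (fun c => (dvec n c)⁻¹ * (dvec n c)⁻¹) c *
        ∑ x : Fin d, (∑ t : Fin (2^n), haarMatrix n t c * u (t : ℕ) x)^2 = G (c : ℕ) := by
    intro c
    simp only []
    by_cases hc : (c : ℕ) = 0
    · have hone : ∀ t : Fin (2^n), haarMatrix n t c = 1 := by
        intro t
        show (if (c : ℕ) = 0 then (1:ℝ) else _) = 1
        rw [if_pos hc]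
      have hw : ∀ x : Fin d, ∑ t : Fin (2^n), haarMatrix n t c * u (t : ℕ) x
          = ∑ t ∈ Finset.range (2^n), u t x := by
        intro x
        rw [Finset.sum_congr rfl fun t _ => by rw [hone t, one_mul]]
        exact Fin.sum_univ_eq_sum_range (fun t => u t x) (2^n)
      rw [Finset.sum_congr rfl fun x _ => by rw [hw x]]
      rw [hc]
      rw [hGdef]
      simp only [dvec, if_pos hc, localAvg, if_true]
      have hT0 : ((2^n : ℕ) : ℝ) ≠ 0 := by positivity
      rw [Finset.mul_sum]
      refine Finset.sum_congr rfl fun x _ => ?_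
      rw [show (1 - 1) * 2^n = 0 from by omega, show 1 * 2^n = 2^n from by omega,
        ← Finset.range_eq_Ico, one_div]
      ring
    · obtain ⟨hm, hl, hu⟩ := log_facts n c hc
      set m := Nat.log 2 (c : ℕ) with hmdef
      set i := (c : ℕ) - 2^m + 1 with hidef
      have h2m : (2:ℕ)^(m+1) = 2 * 2^m := by rw [pow_succ]; ring
      have hpow1 : 1 ≤ (2:ℕ)^m := Nat.one_le_two_pow
      have hi1 : 1 ≤ i := by omega
      have hiu : i ≤ 2^m := by omega
      have hσ1 : 1 ≤ (2:ℕ)^(n - m - 1) := Nat.one_le_two_pow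
      have hw : ∀ x : Fin d, ∑ t : Fin (2^n), haarMatrix n t c * u (t : ℕ) x
          = (∑ t ∈ Finset.Ico ((2*i-2) * 2^(n-m-1)) ((2*i-1) * 2^(n-m-1)), u t x)
            - ∑ t ∈ Finset.Ico ((2*i-1) * 2^(n-m-1)) (2*i * 2^(n-m-1)), u t x := by
        intro x
        rw [Finset.sum_congr rfl fun t _ => by rw [entry_eq n t c m hm hl hu]]
        rw [Fin.sum_univ_eq_sum_range (fun t => haarVec (2 * 2^(n-m-1)) i t * u t x)]
        exact sum_haar_mul _ _ _ hσ1 hi1 (block_bound hm hiu) (fun t => u t x)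
      rw [Finset.sum_congr rfl fun x _ => by rw [hw x]]
      rw [hGdef]
      simp only [dvec, if_neg hc, localAvg]
      rw [← hmdef, ← hidef]
      have hcast : ((2^(n - m) : ℕ) : ℝ) = 2 * ((2^(n - m - 1) : ℕ) : ℝ) := by
        rw [two_pow_split hm]; push_cast; ring
      have hσ0 : ((2^(n - m - 1) : ℕ) : ℝ) ≠ 0 := by positivity
      rw [Finset.mul_sum, Finset.mul_sum]
      refine Finset.sum_congr rfl fun x _ => ?_
      rw [show 2*i - 1 - 1 = 2*i - 2 from by omega]
      rw [hcast, mul_inv]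
      simp only [one_div]
      ring
  rw [Finset.sum_congr rfl fun c _ => hcol c,
    Fin.sum_univ_eq_sum_range G (2^n), dyadic_sum n G]
  have hG0 : G 0 = ∑ x : Fin d, (localAvg d u (2^n) 1 x)^2 := by
    rw [hGdef]; norm_num
  have hblock : ∀ m ∈ Finset.range n, ∑ c ∈ Finset.Ico (2^m) (2^(m+1)), G c
      = (1/4 : ℝ) * ∑ i ∈ Finset.Icc 1 (2^m), ∑ x : Fin d,
          (localAvg d u (2^(n-m-1)) (2*i-1) x - localAvg d u (2^(n-m-1)) (2*i) x)^2 := by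
    intro m hm
    rw [Finset.mem_range] at hm
    rw [block_sum m G, Finset.mul_sum]
    refine Finset.sum_congr rfl fun i hi => ?_
    rw [Finset.mem_Icc] at hi
    have h2m : (2:ℕ)^(m+1) = 2 * 2^m := by rw [pow_succ]; ring
    have hpow1 : 1 ≤ (2:ℕ)^m := Nat.one_le_two_pow
    have hc0 : 2^m + i - 1 ≠ 0 := by omega
    have hlog : Nat.log 2 (2^m + i - 1) = m :=
      Nat.log_eq_of_pow_le_of_lt_pow (by omega) (by omega)
    rw [hGdef]
    simp only [if_neg hc0, hlog]
    rw [show 2^m + i - 1 - 2^m + 1 = i from by omega]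
  rw [Finset.sum_congr rfl hblock, hG0]
  congr 1
  set Φ : ℕ → ℝ := fun m => (1/4 : ℝ) * ∑ i ∈ Finset.Icc 1 (2^m), ∑ x : Fin d,
    (localAvg d u (2^(n-m-1)) (2*i-1) x - localAvg d u (2^(n-m-1)) (2*i) x)^2 with hΦ
  rw [show (∑ m ∈ Finset.range n, Φ m) = ∑ k ∈ Finset.range n, Φ (n - 1 - k) from
    (Finset.sum_range_reflect Φ n).symm]
  refine Finset.sum_congr rfl fun k hk => ?_
  rw [Finset.mem_range] at hk
  rw [hΦ]
  simp only []
  rw [show n - (n - 1 - k) - 1 = k from by omega]
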